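/- Strong convexity of E* for generalized nested logit models: with G the GNL generating function as in the context, define E(u) = μ·ln G(e^{u⁽¹⁾}, …, e^{u⁽ⁿ⁾}) + μγ, where γ is Euler's constant. Then the convex conjugate E*(p) = sup_{u ∈ ℝⁿ}(⟨p,u⟩ − E(u)) is β-strongly convex on the simplex Δ with respect to the ℓ1-norm, with convexity parameter β = 1 / ( 2/(min_{ℓ∈L} μ_ℓ) − 1/μ ). -/

import Mathlib

open Real Finset
set_option linter.unusedSectionVars false
set_option linter.unusedVariables false
namespace GNL16
variable {ι K : Type} [Fintype K]

noncomputable def Pf (F : K → Finset ι) (d b : ι → K → ℝ) (ℓ : K) (t : ℝ) : ℝ :=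
  ∑ i ∈ F ℓ, exp (d i ℓ + t * b i ℓ)
noncomputable def P1 (F : K → Finset ι) (d b : ι → K → ℝ) (ℓ : K) (t : ℝ) : ℝ :=
  ∑ i ∈ F ℓ, b i ℓ * exp (d i ℓ + t * b i ℓ)
noncomputable def P2 (F : K → Finset ι) (d b : ι → K → ℝ) (ℓ : K) (t : ℝ) : ℝ :=
  ∑ i ∈ F ℓ, (b i ℓ)^2 * exp (d i ℓ + t * b i ℓ)
noncomputable def Qf (F : K → Finset ι) (d b : ι → K → ℝ) (θ : K → ℝ) (ℓ : K) (t : ℝ) : ℝ :=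
  exp (θ ℓ * log (Pf F d b ℓ t))
noncomputable def Tf (F : K → Finset ι) (d b : ι → K → ℝ) (θ : K → ℝ) (t : ℝ) : ℝ :=
  ∑ ℓ, Qf F d b θ ℓ t
noncomputable def T1 (F : K → Finset ι) (d b : ι → K → ℝ) (θ : K → ℝ) (t : ℝ) : ℝ :=
  ∑ ℓ, θ ℓ * (P1 F d b ℓ t / Pf F d b ℓ t) * Qf F d b θ ℓ t
noncomputable def T2 (F : K → Finset ι) (d b : ι → K → ℝ) (θ : K → ℝ) (t : ℝ) : ℝ :=
  ∑ ℓ, (θ ℓ * (P2 F d b ℓ t / Pf F d b ℓ t - (P1 F d b ℓ t / Pf F d b ℓ t)^2)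
      + (θ ℓ)^2 * (P1 F d b ℓ t / Pf F d b ℓ t)^2) * Qf F d b θ ℓ t

variable (F : K → Finset ι) (d b : ι → K → ℝ) (θ : K → ℝ)

lemma Pf_pos {ℓ : K} (hF : (F ℓ).Nonempty) (t : ℝ) : 0 < Pf F d b ℓ t :=
  Finset.sum_pos (fun i _ => exp_pos _) hF
lemma Qf_pos (ℓ : K) (t : ℝ) : 0 < Qf F d b θ ℓ t := exp_pos _
lemma Tf_pos [Nonempty K] (t : ℝ) : 0 < Tf F d b θ t :=
  Finset.sum_pos (fun ℓ _ => Qf_pos F d b θ ℓ t) univ_nonempty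

lemma cs_exp {ι' : Type} (F : Finset ι') (d b : ι' → ℝ) :
    (∑ i ∈ F, b i * exp (d i))^2 ≤ (∑ i ∈ F, exp (d i)) * ∑ i ∈ F, (b i)^2 * exp (d i) := by
  have h := Finset.sum_mul_sq_le_sq_mul_sq F (fun i => exp (d i / 2)) (fun i => b i * exp (d i / 2))
  calc (∑ i ∈ F, b i * exp (d i))^2
      = (∑ i ∈ F, exp (d i / 2) * (b i * exp (d i / 2)))^2 := by
        congr 1; apply Finset.sum_congr rfl; intro i _
        rw [show d i = d i/2 + d i/2 by ring, exp_add]; ring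
    _ ≤ (∑ i ∈ F, exp (d i / 2)^2) * ∑ i ∈ F, (b i * exp (d i / 2))^2 := h
    _ = (∑ i ∈ F, exp (d i)) * ∑ i ∈ F, (b i)^2 * exp (d i) := by
        congr 1 <;> (apply Finset.sum_congr rfl; intro i _) <;>
          (rw [show d i = d i/2 + d i/2 by ring, exp_add]; ring_nf)

/-- The second-derivative (Hessian along a line) bound. -/
lemma Phi2_le [Nonempty K] (μ m s : ℝ) (μl : K → ℝ)
    (hμ : 0 < μ) (hm : 0 < m) (hmμ : m ≤ μ) (hml : ∀ ℓ, m ≤ μl ℓ)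
    (hθ : ∀ ℓ, θ ℓ = μl ℓ / μ)
    (hF : ∀ ℓ, (F ℓ).Nonempty)
    (hb : ∀ i ℓ, i ∈ F ℓ → |b i ℓ| * μl ℓ ≤ s) (t : ℝ) :
    μ * ((T2 F d b θ t * Tf F d b θ t - (T1 F d b θ t)^2) / (Tf F d b θ t)^2)
      ≤ s^2 / m := by
  have hmlp : ∀ ℓ, 0 < μl ℓ := fun ℓ => lt_of_lt_of_le hm (hml ℓ)
  have hPpos : ∀ ℓ, 0 < Pf F d b ℓ t := fun ℓ => Pf_pos F d b (hF ℓ) t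
  have hQpos : ∀ ℓ : K, 0 < Qf F d b θ ℓ t := fun ℓ => Qf_pos F d b θ ℓ t
  have hTpos : 0 < Tf F d b θ t := Tf_pos F d b θ t
  set y : K → ℝ := fun ℓ => μl ℓ * (P1 F d b ℓ t / Pf F d b ℓ t) with hy
  set w : K → ℝ := fun ℓ =>
    (μl ℓ)^2 * (P2 F d b ℓ t / Pf F d b ℓ t - (P1 F d b ℓ t / Pf F d b ℓ t)^2) with hw
  set Q : K → ℝ := fun ℓ => Qf F d b θ ℓ t with hQ
  set A' : ℝ := ∑ ℓ, w ℓ / μl ℓ * Q ℓ with hA'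
  set A : ℝ := ∑ ℓ, w ℓ * Q ℓ with hA
  set B : ℝ := ∑ ℓ, (y ℓ)^2 * Q ℓ with hB
  set C : ℝ := ∑ ℓ, y ℓ * Q ℓ with hC
  have hwpos : ∀ ℓ, 0 ≤ w ℓ := by
    intro ℓ
    have h1 : (P1 F d b ℓ t)^2 ≤ Pf F d b ℓ t * P2 F d b ℓ t :=
      cs_exp (F ℓ) (fun i => d i ℓ + t * b i ℓ) (fun i => b i ℓ)
    have h2 : (P1 F d b ℓ t / Pf F d b ℓ t)^2 ≤ P2 F d b ℓ t / Pf F d b ℓ t := by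
      rw [div_pow, div_le_div_iff₀ (pow_pos (hPpos ℓ) 2) (hPpos ℓ)]
      nlinarith [hPpos ℓ, h1]
    exact mul_nonneg (sq_nonneg _) (sub_nonneg.2 h2)
  have houter : C^2 ≤ Tf F d b θ t * B := by
    have hcs := cs_exp (univ : Finset K) (fun ℓ => θ ℓ * log (Pf F d b ℓ t)) y
    simpa [hC, hB, Tf, Qf, hQ] using hcs
  have hwys : ∀ ℓ, w ℓ + (y ℓ)^2 ≤ s^2 := by
    intro ℓ
    have h1 : w ℓ + (y ℓ)^2 = (μl ℓ)^2 * P2 F d b ℓ t / Pf F d b ℓ t := by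
      simp only [hw, hy]; field_simp [(hPpos ℓ).ne']; ring
    rw [h1, div_le_iff₀ (hPpos ℓ)]
    rw [P2, Pf, Finset.mul_sum, Finset.mul_sum]
    apply Finset.sum_le_sum
    intro i hi
    have hsq : (|b i ℓ| * μl ℓ)^2 ≤ s^2 :=
      pow_le_pow_left₀ (mul_nonneg (abs_nonneg _) (hmlp ℓ).le) (hb i ℓ hi) 2
    calc (μl ℓ)^2 * ((b i ℓ)^2 * exp (d i ℓ + t * b i ℓ))
        = (|b i ℓ| * μl ℓ)^2 * exp (d i ℓ + t * b i ℓ) := by rw [mul_pow, sq_abs]; ring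
      _ ≤ s^2 * exp (d i ℓ + t * b i ℓ) := mul_le_mul_of_nonneg_right hsq (exp_pos _).le
  have hT2μ : μ * T2 F d b θ t = A' + B / μ := by
    rw [T2, Finset.mul_sum, hA', hB, Finset.sum_div, ← Finset.sum_add_distrib]
    apply Finset.sum_congr rfl
    intro ℓ _
    simp only [hw, hy, hQ, hθ ℓ]
    field_simp [(hmlp ℓ).ne', hμ.ne', (hPpos ℓ).ne']
  have hT1C : T1 F d b θ t = C / μ := by
    rw [T1, hC, Finset.sum_div]
    apply Finset.sum_congr rfl
    intro ℓ _
    simp only [hy, hQ, hθ ℓ]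
    field_simp [(hmlp ℓ).ne', hμ.ne', (hPpos ℓ).ne']
    try ring
  have hA'A : A' ≤ A / m := by
    rw [hA', hA, Finset.sum_div]
    apply Finset.sum_le_sum
    intro ℓ _
    rw [div_mul_eq_mul_div]
    exact div_le_div_of_nonneg_left (mul_nonneg (hwpos ℓ) (hQpos ℓ).le) hm (hml ℓ)
  have hABs : A + B ≤ s^2 * Tf F d b θ t := by
    rw [hA, hB, ← Finset.sum_add_distrib, Tf, Finset.mul_sum]
    apply Finset.sum_le_sum
    intro ℓ _
    have : w ℓ * Q ℓ + (y ℓ)^2 * Q ℓ = (w ℓ + (y ℓ)^2) * Q ℓ := by ring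
    rw [this]
    exact mul_le_mul_of_nonneg_right (hwys ℓ) (hQpos ℓ).le
  have hT1sq : μ * (T1 F d b θ t)^2 = C^2 / μ := by
    rw [hT1C]; field_simp [hμ.ne']
  have hkey : μ * (T2 F d b θ t * Tf F d b θ t - (T1 F d b θ t)^2)
      ≤ s^2 / m * (Tf F d b θ t)^2 := by
    have e1 : μ * (T2 F d b θ t * Tf F d b θ t - (T1 F d b θ t)^2)
        = A' * Tf F d b θ t + (B * Tf F d b θ t - C^2)/μ := by
      linear_combination Tf F d b θ t * hT2μ - hT1sq
    have hBC : 0 ≤ B * Tf F d b θ t - C^2 := by nlinarith [houter]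
    calc μ * (T2 F d b θ t * Tf F d b θ t - (T1 F d b θ t)^2)
        = A' * Tf F d b θ t + (B * Tf F d b θ t - C^2)/μ := e1
      _ ≤ (A/m) * Tf F d b θ t + (B * Tf F d b θ t - C^2)/m := by
          have s1 : A' * Tf F d b θ t ≤ (A/m) * Tf F d b θ t :=
            mul_le_mul_of_nonneg_right hA'A hTpos.le
          have s2 : (B * Tf F d b θ t - C^2)/μ ≤ (B * Tf F d b θ t - C^2)/m :=
            div_le_div_of_nonneg_left hBC hm hmμ
          exact add_le_add s1 s2
      _ = ((A + B) * Tf F d b θ t - C^2)/m := by ring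
      _ ≤ (s^2 * Tf F d b θ t * Tf F d b θ t)/m := by
          have hnum : (A + B) * Tf F d b θ t - C^2 ≤ s^2 * Tf F d b θ t * Tf F d b θ t := by
            nlinarith [mul_le_mul_of_nonneg_right hABs hTpos.le, sq_nonneg C]
          exact (div_le_div_iff_of_pos_right hm).2 hnum
      _ = s^2/m * (Tf F d b θ t)^2 := by ring
  rw [← mul_div_assoc, div_le_iff₀ (pow_pos hTpos 2)]
  exact hkey


lemma hasDerivAt_Pf (ℓ : K) (t : ℝ) : HasDerivAt (Pf F d b ℓ) (P1 F d b ℓ t) t := by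
  have h : HasDerivAt (Pf F d b ℓ) (∑ i ∈ F ℓ, exp (d i ℓ + t * b i ℓ) * b i ℓ) t := by
    apply HasDerivAt.fun_sum
    intro i _
    exact (((hasDerivAt_mul_const (b i ℓ)).const_add (d i ℓ)).exp)
  have e : P1 F d b ℓ t = ∑ i ∈ F ℓ, exp (d i ℓ + t * b i ℓ) * b i ℓ := by
    simp [P1, mul_comm]
  rw [e]; exact h

lemma hasDerivAt_P1 (ℓ : K) (t : ℝ) : HasDerivAt (P1 F d b ℓ) (P2 F d b ℓ t) t := by
  have h : HasDerivAt (P1 F d b ℓ) (∑ i ∈ F ℓ, b i ℓ * (exp (d i ℓ + t * b i ℓ) * b i ℓ)) t := by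
    apply HasDerivAt.fun_sum
    intro i _
    exact (((hasDerivAt_mul_const (b i ℓ)).const_add (d i ℓ)).exp).const_mul (b i ℓ)
  have e : P2 F d b ℓ t = ∑ i ∈ F ℓ, b i ℓ * (exp (d i ℓ + t * b i ℓ) * b i ℓ) := by
    simp only [P2]; exact Finset.sum_congr rfl (fun i _ => by ring)
  rw [e]; exact h

lemma hasDerivAt_Qf {ℓ : K} (hF : (F ℓ).Nonempty) (t : ℝ) :
    HasDerivAt (Qf F d b θ ℓ) (θ ℓ * (P1 F d b ℓ t / Pf F d b ℓ t) * Qf F d b θ ℓ t) t := by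
  have h := (((hasDerivAt_Pf F d b ℓ t).log (Pf_pos F d b hF t).ne').const_mul (θ ℓ)).exp
  have e : exp (θ ℓ * log (Pf F d b ℓ t)) * (θ ℓ * (P1 F d b ℓ t / Pf F d b ℓ t))
      = θ ℓ * (P1 F d b ℓ t / Pf F d b ℓ t) * Qf F d b θ ℓ t := by
    rw [Qf]; ring
  rw [← e]; exact h

lemma hasDerivAt_Tf [Nonempty K] (hF : ∀ ℓ, (F ℓ).Nonempty) (t : ℝ) :
    HasDerivAt (Tf F d b θ) (T1 F d b θ t) t := by
  apply HasDerivAt.fun_sum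
  intro ℓ _
  exact hasDerivAt_Qf F d b θ (hF ℓ) t

lemma hasDerivAt_T1 [Nonempty K] (hF : ∀ ℓ, (F ℓ).Nonempty) (t : ℝ) :
    HasDerivAt (T1 F d b θ) (T2 F d b θ t) t := by
  apply HasDerivAt.fun_sum
  intro ℓ _
  have hP := Pf_pos F d b (hF ℓ) t
  have hdiv : HasDerivAt (fun t => P1 F d b ℓ t / Pf F d b ℓ t)
      ((P2 F d b ℓ t * Pf F d b ℓ t - P1 F d b ℓ t * P1 F d b ℓ t) / (Pf F d b ℓ t)^2) t :=
    (hasDerivAt_P1 F d b ℓ t).div (hasDerivAt_Pf F d b ℓ t) hP.ne'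
  have h := ((hdiv.const_mul (θ ℓ)).mul (hasDerivAt_Qf F d b θ (hF ℓ) t))
  convert h using 1
  all_goals try rfl
  field_simp

noncomputable def Phi (F : K → Finset ι) (d b : ι → K → ℝ) (θ : K → ℝ) (μ : ℝ) (t : ℝ) : ℝ :=
  μ * log (Tf F d b θ t)

lemma hasDerivAt_Phi [Nonempty K] (μ : ℝ) (hF : ∀ ℓ, (F ℓ).Nonempty) (t : ℝ) :
    HasDerivAt (Phi F d b θ μ) (μ * (T1 F d b θ t / Tf F d b θ t)) t :=
  ((hasDerivAt_Tf F d b θ hF t).log (Tf_pos F d b θ t).ne').const_mul μ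

lemma hasDerivAt_Phi1 [Nonempty K] (μ : ℝ) (hF : ∀ ℓ, (F ℓ).Nonempty) (t : ℝ) :
    HasDerivAt (fun t => μ * (T1 F d b θ t / Tf F d b θ t))
      (μ * ((T2 F d b θ t * Tf F d b θ t - (T1 F d b θ t)^2) / (Tf F d b θ t)^2)) t := by
  have h := ((hasDerivAt_T1 F d b θ hF t).div (hasDerivAt_Tf F d b θ hF t)
    (Tf_pos F d b θ t).ne').const_mul μ
  convert h using 1
  all_goals try rfl
  ring

lemma convex_aux [Nonempty K] (μ m s : ℝ) (μl : K → ℝ)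
    (hμ : 0 < μ) (hm : 0 < m) (hmμ : m ≤ μ) (hml : ∀ ℓ, m ≤ μl ℓ)
    (hθ : ∀ ℓ, θ ℓ = μl ℓ / μ)
    (hF : ∀ ℓ, (F ℓ).Nonempty)
    (hb : ∀ i ℓ, i ∈ F ℓ → |b i ℓ| * μl ℓ ≤ s) :
    ConvexOn ℝ Set.univ (fun t => s^2/(2*m) * t^2 - Phi F d b θ μ t) := by
  set C : ℝ := s^2/(2*m) with hCdef
  have h1 : ∀ t : ℝ, HasDerivAt (fun t => C * t^2 - Phi F d b θ μ t)
      (C * (2*t) - μ * (T1 F d b θ t / Tf F d b θ t)) t := by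
    intro t
    have hsq : HasDerivAt (fun t : ℝ => C * t^2) (C * (2*t)) t := by
      simpa using ((hasDerivAt_pow 2 t).const_mul C)
    exact hsq.sub (hasDerivAt_Phi F d b θ μ hF t)
  have h2 : ∀ t : ℝ, HasDerivAt (fun t => C * (2*t) - μ * (T1 F d b θ t / Tf F d b θ t))
      (C * 2 - μ * ((T2 F d b θ t * Tf F d b θ t - (T1 F d b θ t)^2) / (Tf F d b θ t)^2)) t := by
    intro t
    have hlin : HasDerivAt (fun t : ℝ => C * (2*t)) (C * 2) t := by
      simpa [mul_comm] using ((hasDerivAt_mul_const (2:ℝ)).const_mul C)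
    exact hlin.sub (hasDerivAt_Phi1 F d b θ μ hF t)
  have hd1 : deriv (fun t => C * t^2 - Phi F d b θ μ t)
      = fun t => C * (2*t) - μ * (T1 F d b θ t / Tf F d b θ t) := by
    funext t; exact (h1 t).deriv
  apply convexOn_univ_of_deriv2_nonneg
  · exact fun t => (h1 t).differentiableAt
  · rw [hd1]; exact fun t => (h2 t).differentiableAt
  · intro t
    have : deriv^[2] (fun t => C * t^2 - Phi F d b θ μ t) t
        = C * 2 - μ * ((T2 F d b θ t * Tf F d b θ t - (T1 F d b θ t)^2) / (Tf F d b θ t)^2) := by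
      show deriv (deriv (fun t => C * t^2 - Phi F d b θ μ t)) t = _
      rw [hd1]
      exact (h2 t).deriv
    rw [this]
    have hC2 : C * 2 = s^2/m := by rw [hCdef]; field_simp
    rw [hC2]
    have := Phi2_le F d b θ μ m s μl hμ hm hmμ hml hθ hF hb t
    linarith

lemma phi_midpoint [Nonempty K] (μ m s : ℝ) (μl : K → ℝ)
    (hμ : 0 < μ) (hm : 0 < m) (hmμ : m ≤ μ) (hml : ∀ ℓ, m ≤ μl ℓ)
    (hθ : ∀ ℓ, θ ℓ = μl ℓ / μ)
    (hF : ∀ ℓ, (F ℓ).Nonempty)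
    (hb : ∀ i ℓ, i ∈ F ℓ → |b i ℓ| * μl ℓ ≤ s)
    (α : ℝ) (hα0 : 0 ≤ α) (hα1 : α ≤ 1) :
    α * Phi F d b θ μ (1-α) + (1-α) * Phi F d b θ μ (-α)
      ≤ Phi F d b θ μ 0 + s^2/(2*m) * (α*(1-α)) := by
  have hcvx := convex_aux F d b θ μ m s μl hμ hm hmμ hml hθ hF hb
  have key := hcvx.2 (Set.mem_univ (1-α)) (Set.mem_univ (-α)) hα0 (by linarith : (0:ℝ) ≤ 1 - α)
    (by ring : α + (1-α) = 1)
  simp only [smul_eq_mul] at key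
  have h0 : α * (1-α) + (1-α)*(-α) = 0 := by ring
  rw [h0] at key
  nlinarith [key]

end GNL16
/-- Strong convexity of `E*` for generalized nested logit models: for the GNL
generating function `G`, the convex conjugate of `E(u) = μ ln G(e^u) + μγ` is `β`-strongly
convex on the simplex `Δ` w.r.t. the `ℓ1`-norm with `β = 1/(2/(min_ℓ μ_ℓ) − 1/μ)`. -/
theorem conjugate_strongly_convex_GNL
    (n : ℕ) (hn : 2 ≤ n)
    (L : Type) [Fintype L] [Nonempty L]
    (μ : ℝ) (hμ : 0 < μ)
    (μl : L → ℝ) (hμl : ∀ ℓ, 0 < μl ℓ) (hμlμ : ∀ ℓ, μl ℓ ≤ μ)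
    (σ : Fin n → L → ℝ) (hσ0 : ∀ i ℓ, 0 ≤ σ i ℓ)
    (hσ1 : ∀ i, ∑ ℓ, σ i ℓ = 1)
    (hnest : ∀ ℓ : L, ∃ i, 0 < σ i ℓ)
    (G : (Fin n → ℝ) → ℝ)
    (hG : ∀ x : Fin n → ℝ, (∀ i, 0 < x i) →
      G x = ∑ ℓ, (∑ i ∈ Finset.univ.filter (fun i => 0 < σ i ℓ),
        (σ i ℓ * x i) ^ (1 / μl ℓ)) ^ (μl ℓ / μ))
    (E : (Fin n → ℝ) → ℝ)
    (hE : ∀ u : Fin n → ℝ,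
      E u = μ * Real.log (G (fun i => Real.exp (u i))) + μ * Real.eulerMascheroniConstant)
    (Estar : (Fin n → ℝ) → ℝ)
    (hEstar : ∀ p : Fin n → ℝ,
      Estar p = sSup {y : ℝ | ∃ u : Fin n → ℝ, y = ∑ i, p i * u i - E u}) :
    ∀ p ∈ {p : Fin n → ℝ | ∑ i, p i = 1 ∧ ∀ i, 0 ≤ p i},
    ∀ q ∈ {p : Fin n → ℝ | ∑ i, p i = 1 ∧ ∀ i, 0 ≤ p i},
    ∀ α ∈ Set.Icc (0 : ℝ) 1,
      Estar (α • p + (1 - α) • q)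
        ≤ α * Estar p + (1 - α) * Estar q
          - (1 / (2 / (⨅ ℓ, μl ℓ) - 1 / μ)) / 2
            * α * (1 - α) * (∑ i, |p i - q i|) ^ 2 := by
  intro p hp q hq α hα
  obtain ⟨hp1, hp0⟩ := hp
  obtain ⟨hq1, hq0⟩ := hq
  obtain ⟨hα0, hα1⟩ := hα
  set m := ⨅ ℓ, μl ℓ with hmdef
  obtain ⟨ℓ₀, hℓ₀⟩ := exists_eq_ciInf_of_finite (f := μl)
  have hm : 0 < m := by rw [hmdef, ← hℓ₀]; exact hμl ℓ₀
  have hml : ∀ ℓ, m ≤ μl ℓ := fun ℓ => ciInf_le (Finite.bddBelow_range μl) ℓ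
  have hmμ : m ≤ μ := by rw [hmdef, ← hℓ₀]; exact hμlμ ℓ₀
  have hFne : ∀ ℓ : L, (Finset.univ.filter (fun i => 0 < σ i ℓ)).Nonempty := by
    intro ℓ
    obtain ⟨i, hi⟩ := hnest ℓ
    exact ⟨i, Finset.mem_filter.2 ⟨Finset.mem_univ i, hi⟩⟩
  -- E along a line equals the abstract Phi
  have E_line : ∀ (u z : Fin n → ℝ) (t : ℝ),
      E (u + t • z) = GNL16.Phi (fun ℓ => Finset.univ.filter (fun i => 0 < σ i ℓ))
        (fun i ℓ => (Real.log (σ i ℓ) + u i) / μl ℓ) (fun i ℓ => z i / μl ℓ)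
        (fun ℓ => μl ℓ / μ) μ t + μ * Real.eulerMascheroniConstant := by
    intro u z t
    have hx : ∀ i, (0:ℝ) < Real.exp ((u + t • z) i) := fun i => Real.exp_pos _
    rw [hE, hG _ hx, GNL16.Phi]
    have harg : ∀ i, (u + t • z) i = u i + t * z i := fun i => by
      simp [Pi.add_apply, Pi.smul_apply, smul_eq_mul]
    have hXY : (∑ ℓ, (∑ i ∈ Finset.univ.filter (fun i => 0 < σ i ℓ),
          (σ i ℓ * Real.exp ((u + t • z) i)) ^ (1 / μl ℓ)) ^ (μl ℓ / μ))
        = GNL16.Tf (fun ℓ => Finset.univ.filter (fun i => 0 < σ i ℓ))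
          (fun i ℓ => (Real.log (σ i ℓ) + u i) / μl ℓ) (fun i ℓ => z i / μl ℓ)
          (fun ℓ => μl ℓ / μ) t := by
      rw [GNL16.Tf]
      apply Finset.sum_congr rfl
      intro ℓ _
      have hPf : (∑ i ∈ Finset.univ.filter (fun i => 0 < σ i ℓ),
            (σ i ℓ * Real.exp ((u + t • z) i)) ^ (1 / μl ℓ))
          = GNL16.Pf (fun ℓ => Finset.univ.filter (fun i => 0 < σ i ℓ))
            (fun i ℓ => (Real.log (σ i ℓ) + u i) / μl ℓ) (fun i ℓ => z i / μl ℓ) ℓ t := by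
        rw [GNL16.Pf]
        apply Finset.sum_congr rfl
        intro i hi
        have hσi : 0 < σ i ℓ := (Finset.mem_filter.1 hi).2
        rw [harg i, Real.rpow_def_of_pos (by positivity),
          Real.log_mul hσi.ne' (Real.exp_ne_zero _), Real.log_exp]
        congr 1
        field_simp [(hμl ℓ).ne']
        ring
      rw [GNL16.Qf, hPf,
        Real.rpow_def_of_pos (GNL16.Pf_pos (fun ℓ => Finset.univ.filter (fun i => 0 < σ i ℓ))
          (fun i ℓ => (Real.log (σ i ℓ) + u i) / μl ℓ) (fun i ℓ => z i / μl ℓ)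
          (hFne ℓ) t), mul_comm]
    rw [hXY]
  -- lower bound on E
  have E_lb : ∀ (u : Fin n → ℝ) (i : Fin n) (ℓ : L), 0 < σ i ℓ →
      Real.log (σ i ℓ) + u i + μ * Real.eulerMascheroniConstant ≤ E u := by
    intro u i ℓ hσi
    rw [hE u]
    have hx : ∀ j, (0:ℝ) < Real.exp (u j) := fun j => Real.exp_pos _
    rw [hG _ hx]
    have hc : (0:ℝ) < σ i ℓ * Real.exp (u i) := by positivity
    have hterm : (σ i ℓ * Real.exp (u i)) ^ (1/μ)
        ≤ (∑ i' ∈ Finset.univ.filter (fun i' => 0 < σ i' ℓ),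
            (σ i' ℓ * Real.exp (u i')) ^ (1 / μl ℓ)) ^ (μl ℓ / μ) := by
      have hc1 : (σ i ℓ * Real.exp (u i)) ^ (1/μ)
          = ((σ i ℓ * Real.exp (u i)) ^ (1/μl ℓ)) ^ (μl ℓ / μ) := by
        rw [← Real.rpow_mul hc.le]
        congr 1
        field_simp [(hμl ℓ).ne', hμ.ne']
      rw [hc1]
      apply Real.rpow_le_rpow (Real.rpow_nonneg hc.le _) ?_ (div_nonneg (hμl ℓ).le hμ.le)
      apply Finset.single_le_sum (f := fun i' => (σ i' ℓ * Real.exp (u i')) ^ (1 / μl ℓ))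
      · intro j _
        apply Real.rpow_nonneg
        exact mul_nonneg (hσ0 j ℓ) (Real.exp_pos _).le
      · exact Finset.mem_filter.2 ⟨Finset.mem_univ i, hσi⟩
    have hsum : (σ i ℓ * Real.exp (u i)) ^ (1/μ)
        ≤ ∑ ℓ', (∑ i' ∈ Finset.univ.filter (fun i' => 0 < σ i' ℓ'),
            (σ i' ℓ' * Real.exp (u i')) ^ (1 / μl ℓ')) ^ (μl ℓ' / μ) := by
      refine le_trans hterm (Finset.single_le_sum (f := fun ℓ' => (∑ i' ∈ Finset.univ.filter (fun i' => 0 < σ i' ℓ'), (σ i' ℓ' * Real.exp (u i')) ^ (1 / μl ℓ')) ^ (μl ℓ' / μ)) ?_ (Finset.mem_univ ℓ))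
      intro ℓ' _
      apply Real.rpow_nonneg
      apply Finset.sum_nonneg
      intro j _
      exact Real.rpow_nonneg (mul_nonneg (hσ0 j ℓ') (Real.exp_pos _).le) _
    have hlog : (1/μ) * Real.log (σ i ℓ * Real.exp (u i))
        ≤ Real.log (∑ ℓ', (∑ i' ∈ Finset.univ.filter (fun i' => 0 < σ i' ℓ'),
            (σ i' ℓ' * Real.exp (u i')) ^ (1 / μl ℓ')) ^ (μl ℓ' / μ)) := by
      rw [← Real.log_rpow hc]
      exact Real.log_le_log (Real.rpow_pos_of_pos hc _) hsum
    have hmul := mul_le_mul_of_nonneg_left hlog hμ.le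
    have heq : μ * ((1/μ) * Real.log (σ i ℓ * Real.exp (u i)))
        = Real.log (σ i ℓ) + u i := by
      rw [Real.log_mul hσi.ne' (Real.exp_ne_zero _), Real.log_exp]
      field_simp
    linarith [hmul, heq.symm.le, heq.le]
  -- the choice of a nest for each alternative
  have hch : ∀ i : Fin n, ∃ ℓ, 0 < σ i ℓ := by
    intro i
    by_contra h
    push_neg at h
    have : ∑ ℓ, σ i ℓ ≤ 0 := Finset.sum_nonpos (fun ℓ _ => h ℓ)
    rw [hσ1 i] at this
    linarith
  choose c hc using hch
  -- boundedness of the sets defining Estar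
  have bdd : ∀ r : Fin n → ℝ, (∑ i, r i = 1) → (∀ i, 0 ≤ r i) →
      BddAbove {y : ℝ | ∃ u : Fin n → ℝ, y = ∑ i, r i * u i - E u} := by
    intro r hr1 hr0
    refine ⟨-(∑ i, r i * (Real.log (σ i (c i)) + μ * Real.eulerMascheroniConstant)), ?_⟩
    rintro y ⟨u, rfl⟩
    have h1 : ∀ i ∈ Finset.univ, r i * u i
        ≤ r i * (E u - Real.log (σ i (c i)) - μ * Real.eulerMascheroniConstant) := by
      intro i _
      apply mul_le_mul_of_nonneg_left _ (hr0 i)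
      linarith [E_lb u i (c i) (hc i)]
    have h2 := Finset.sum_le_sum h1
    have h3 : ∑ i, r i * (E u - Real.log (σ i (c i)) - μ * Real.eulerMascheroniConstant)
        = E u - ∑ i, r i * (Real.log (σ i (c i)) + μ * Real.eulerMascheroniConstant) := by
      rw [Finset.sum_congr rfl (fun i _ => by ring :
        ∀ i ∈ Finset.univ, r i * (E u - Real.log (σ i (c i)) - μ * Real.eulerMascheroniConstant)
          = r i * E u - r i * (Real.log (σ i (c i)) + μ * Real.eulerMascheroniConstant)),
        Finset.sum_sub_distrib, ← Finset.sum_mul, hr1, one_mul]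
    rw [h3] at h2
    linarith
  -- key midpoint smoothness inequality for E
  have key_mid : ∀ (u z : Fin n → ℝ) (s : ℝ), 0 ≤ s → (∀ i, |z i| ≤ s) →
      α * E (u + (1-α) • z) + (1-α) * E (u + (-α) • z)
        ≤ E u + s^2/(2*m) * (α*(1-α)) := by
    intro u z s hs hzs
    have hb : ∀ (i : Fin n) (ℓ : L), i ∈ Finset.univ.filter (fun i => 0 < σ i ℓ) →
        |z i / μl ℓ| * μl ℓ ≤ s := by
      intro i ℓ _
      rw [abs_div, abs_of_pos (hμl ℓ), div_mul_cancel₀ _ (hμl ℓ).ne']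
      exact hzs i
    have hmid := GNL16.phi_midpoint (fun ℓ => Finset.univ.filter (fun i => 0 < σ i ℓ))
      (fun i ℓ => (Real.log (σ i ℓ) + u i) / μl ℓ) (fun i ℓ => z i / μl ℓ)
      (fun ℓ => μl ℓ / μ) μ m s μl hμ hm hmμ hml (fun ℓ => rfl) hFne hb α hα0 hα1
    have h1 := E_line u z (1-α)
    have h2 := E_line u z (-α)
    have h0 := E_line u z 0
    have hu0 : u + (0:ℝ) • z = u := by simp
    rw [hu0] at h0
    rw [h1, h2, h0]
    linarith [hmid]
  -- final assembly
  rw [hEstar (α • p + (1 - α) • q)]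
  refine csSup_le ⟨∑ i, (α • p + (1 - α) • q) i * (0 : Fin n → ℝ) i - E 0, ⟨0, rfl⟩⟩ ?_
  rintro y ⟨u, rfl⟩
  set T := ∑ i, |p i - q i| with hTdef
  have hT0 : 0 ≤ T := Finset.sum_nonneg fun i _ => abs_nonneg _
  have hs0 : 0 ≤ m * T := mul_nonneg hm.le hT0
  set z : Fin n → ℝ := fun i => (m * T) * (if q i ≤ p i then 1 else -1) with hz
  have hzs : ∀ i, |z i| ≤ m * T := by
    intro i
    rw [hz]
    by_cases h : q i ≤ p i <;> simp [h, abs_of_nonneg hs0]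
  have hterm : ∀ i, (p i - q i) * z i = (m * T) * |p i - q i| := by
    intro i
    rw [hz]
    by_cases h : q i ≤ p i
    · simp only [if_pos h]
      rw [abs_of_nonneg (by linarith)]
      ring
    · simp only [if_neg h]
      rw [abs_of_neg (by push_neg at h; linarith)]
      ring
  have hpqz : ∑ i, p i * z i - ∑ i, q i * z i = m * T * T := by
    rw [← Finset.sum_sub_distrib]
    rw [Finset.sum_congr rfl (fun i _ => by ring :
      ∀ i ∈ Finset.univ, p i * z i - q i * z i = (p i - q i) * z i)]
    rw [Finset.sum_congr rfl (fun i _ => hterm i), ← Finset.mul_sum, ← hTdef]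
  have hkm := key_mid u z (m * T) hs0 hzs
  -- bounds from the sup
  have EpB : ∑ i, p i * (u + (1-α) • z) i - E (u + (1-α) • z) ≤ Estar p := by
    rw [hEstar p]
    exact le_csSup (bdd p hp1 hp0) ⟨_, rfl⟩
  have EqB : ∑ i, q i * (u + (-α) • z) i - E (u + (-α) • z) ≤ Estar q := by
    rw [hEstar q]
    exact le_csSup (bdd q hq1 hq0) ⟨_, rfl⟩
  -- expand the linear sums
  have e1 : ∑ i, p i * (u + (1-α) • z) i
      = ∑ i, p i * u i + (1-α) * ∑ i, p i * z i := by
    rw [Finset.mul_sum, ← Finset.sum_add_distrib]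
    apply Finset.sum_congr rfl
    intro i _
    simp only [Pi.add_apply, Pi.smul_apply, smul_eq_mul]
    ring
  have e2 : ∑ i, q i * (u + (-α) • z) i
      = ∑ i, q i * u i + (-α) * ∑ i, q i * z i := by
    rw [Finset.mul_sum, ← Finset.sum_add_distrib]
    apply Finset.sum_congr rfl
    intro i _
    simp only [Pi.add_apply, Pi.smul_apply, smul_eq_mul]
    ring
  have e3 : ∑ i, (α • p + (1 - α) • q) i * u i
      = α * ∑ i, p i * u i + (1-α) * ∑ i, q i * u i := by
    rw [Finset.mul_sum, Finset.mul_sum, ← Finset.sum_add_distrib]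
    apply Finset.sum_congr rfl
    intro i _
    simp only [Pi.add_apply, Pi.smul_apply, smul_eq_mul]
    ring
  rw [e1] at EpB
  rw [e2] at EqB
  have hA1 := mul_le_mul_of_nonneg_left EpB hα0
  have hA2 := mul_le_mul_of_nonneg_left EqB (by linarith : (0:ℝ) ≤ 1 - α)
  -- the expansion identity
  have expand : α * (∑ i, p i * u i + (1-α) * ∑ i, p i * z i - E (u + (1-α) • z))
      + (1-α) * (∑ i, q i * u i + (-α) * ∑ i, q i * z i - E (u + (-α) • z))
      = (α * ∑ i, p i * u i + (1-α) * ∑ i, q i * u i)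
        + α * (1-α) * (m * T * T)
        - (α * E (u + (1-α) • z) + (1-α) * E (u + (-α) • z)) := by
    linear_combination (α * (1-α)) * hpqz
  have hs2 : (m*T)^2/(2*m) * (α*(1-α)) = m/2 * (α*(1-α)) * T^2 := by
    field_simp
  -- comparing β with m
  have hD : 0 < 2/m - 1/μ := by
    have h1 : 1/μ ≤ 1/m := one_div_le_one_div_of_le hm hmμ
    have h2 : 0 < 1/m := one_div_pos.2 hm
    have h3 : 2/m = 2*(1/m) := by ring
    linarith
  have hβ : 1/(2/m - 1/μ) ≤ m := by
    rw [div_le_iff₀ hD]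
    have hmm : m * (2/m - 1/μ) = 2 - m/μ := by
      field_simp
    have : m/μ ≤ 1 := (div_le_one hμ).2 hmμ
    linarith [hmm.le, hmm.symm.le]
  have hβfac : (1/(2/m - 1/μ))/2 * α * (1-α) * T^2 ≤ m/2 * (α*(1-α)) * T^2 := by
    have hnn : 0 ≤ α * (1-α) * T^2 :=
      mul_nonneg (mul_nonneg hα0 (by linarith)) (sq_nonneg T)
    nlinarith [hβ, hnn]
  rw [e3]
  linarith [hA1, hA2, expand, hkm, hs2, hβfac]
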